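/- Let φ: (0,∞) → ℝ be defined by φ(t) = (2^{y/(B t)} − 1)·t for constants y, B > 0. Then φ is strictly convex on (0, ∞). -/

import Mathlib

theorem stmt10 (y B : ℝ) (hy : 0 < y) (hB : 0 < B) :
    StrictConvexOn ℝ (Set.Ioi (0:ℝ))
      (fun t : ℝ => ((2:ℝ) ^ (y / (B * t)) - 1) * t) := by
  set a : ℝ := (y / B) * Real.log 2 with ha_def
  have ha : 0 < a := mul_pos (div_pos hy hB) (Real.log_pos one_lt_two)
  have hfe : (fun t : ℝ => ((2:ℝ) ^ (y / (B * t)) - 1) * t)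
      = fun t : ℝ => (Real.exp (a * t⁻¹) - 1) * t := by
    funext t
    rw [Real.rpow_def_of_pos two_pos]
    congr 2
    rw [ha_def]
    ring
  rw [hfe]
  set F : ℝ → ℝ := fun t : ℝ => (Real.exp (a * t⁻¹) - 1) * t with hF
  set g : ℝ → ℝ := fun t : ℝ => Real.exp (a * t⁻¹) * (1 - a * t⁻¹) - 1 with hg
  have hd1 : ∀ t ∈ Set.Ioi (0:ℝ), HasDerivAt F (g t) t := by
    intro t ht
    have ht0 : t ≠ 0 := ne_of_gt ht
    have h0 : HasDerivAt (fun t : ℝ => a * t⁻¹) (a * (-(t^2)⁻¹)) t :=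
      (hasDerivAt_inv ht0).const_mul a
    have hmul := (h0.exp.sub_const 1).mul (hasDerivAt_id t)
    refine (hmul : HasDerivAt F _ t).congr_deriv ?_
    simp only [hg, id]
    field_simp
    ring
  have hderiv1 : ∀ t ∈ Set.Ioi (0:ℝ), deriv F t = g t := fun t ht => (hd1 t ht).deriv
  apply strictConvexOn_of_deriv2_pos (convex_Ioi 0)
  · apply ContinuousOn.mul _ continuousOn_id
    apply ContinuousOn.sub _ continuousOn_const
    exact Real.continuous_exp.comp_continuousOn
      (continuousOn_const.mul (continuousOn_id.inv₀ (fun x hx => ne_of_gt hx)))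
  · intro x hx
    rw [interior_Ioi] at hx
    have hx0 : x ≠ 0 := ne_of_gt hx
    have heq : deriv F =ᶠ[nhds x] g :=
      Filter.eventuallyEq_of_mem (Ioi_mem_nhds hx) hderiv1
    have h2 : deriv^[2] F x = deriv g x := by
      simp only [Function.iterate_succ, Function.iterate_zero, Function.comp_apply, id]
      exact heq.deriv_eq
    rw [h2]
    have h0 : HasDerivAt (fun t : ℝ => a * t⁻¹) (a * (-(x^2)⁻¹)) x :=
      (hasDerivAt_inv hx0).const_mul a
    have hgd : HasDerivAt g (Real.exp (a * x⁻¹) * (a^2 / x^3)) x := by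
      have := (h0.exp.mul ((hasDerivAt_const x (1:ℝ)).sub h0)).sub_const 1
      refine (this : HasDerivAt g _ x).congr_deriv ?_
      simp only [Pi.sub_apply]
      field_simp
      ring
    rw [hgd.deriv]
    exact mul_pos (Real.exp_pos _) (div_pos (pow_pos ha 2) (pow_pos hx 3))
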